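/- Fix an outcome ô ∈ {Reject, Accept}^N. Let D ⊆ C_ô, let F ⊆ ℝ^N be a closed set with F ∩ C = p_ô + D, and set G = p_ô + R(D). Then vol_{N−1}(∂G ∩ (∂C \ Y_ô)) ≤ vol_{N−1}(F ∩ (∂C \ Y_ô)). -/

import Mathlib

open MeasureTheory
open scoped ENNReal

/-- Possible outcomes of a test on a single coin. -/
inductive Outcome : Type
  | Reject : Outcome
  | Accept : Outcome
deriving DecidableEq

/-- The cube `C = [p₀, q₀]^N ⊆ ℝ^N`. -/
def cube (N : ℕ) (p₀ q₀ : ℝ) : Set (EuclideanSpace ℝ (Fin N)) :=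
  {x | ∀ i, x i ∈ Set.Icc p₀ q₀}

/-- The corner `p_ô` of the cube `[p₀, q₀]^N` associated with the outcome vector `ô`:
`(p_ô)ᵢ = p₀` if `ôᵢ = Reject` and `(p_ô)ᵢ = q₀` if `ôᵢ = Accept`. -/
noncomputable def corner {N : ℕ} (p₀ q₀ : ℝ) (o : Fin N → Outcome) :
    EuclideanSpace ℝ (Fin N) :=
  WithLp.toLp 2 (fun i => if o i = Outcome.Accept then q₀ else p₀)

/-- The box `C_ô = ∏ᵢ Jᵢ` with `Jᵢ = [0, ε]` if `ôᵢ = Reject` and `Jᵢ = [−ε, 0]` if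
`ôᵢ = Accept`, where `ε = q₀ − p₀`; it satisfies `C = p_ô + C_ô`. -/
def cornerBox {N : ℕ} (p₀ q₀ : ℝ) (o : Fin N → Outcome) :
    Set (EuclideanSpace ℝ (Fin N)) :=
  {x | ∀ i, if o i = Outcome.Accept then x i ∈ Set.Icc (-(q₀ - p₀)) 0
    else x i ∈ Set.Icc 0 (q₀ - p₀)}

/-- `Y_ô`: a point `p` of `∂C` *agrees* with the outcome `ô` if there is no coordinate `i` with
(`pᵢ = p₀` and `ôᵢ = Accept`) or (`pᵢ = q₀` and `ôᵢ = Reject`). -/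
def agreeSet {N : ℕ} (p₀ q₀ : ℝ) (o : Fin N → Outcome) :
    Set (EuclideanSpace ℝ (Fin N)) :=
  {p | p ∈ frontier (cube N p₀ q₀) ∧
    ∀ i, ¬((p i = p₀ ∧ o i = Outcome.Accept) ∨ (p i = q₀ ∧ o i = Outcome.Reject))}

/-- The real sign `±1` associated to a Boolean. -/
noncomputable def sgn (b : Bool) : ℝ := if b then 1 else -1

/-- The reflection `R(S; σ) = {σ ∗ x : x ∈ S}` of a set `S ⊆ ℝ^N` by a sign vector `σ`,
where `∗` denotes componentwise multiplication. -/
noncomputable def reflectSet {N : ℕ} (σ : Fin N → Bool)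
    (S : Set (EuclideanSpace ℝ (Fin N))) : Set (EuclideanSpace ℝ (Fin N)) :=
  (fun x => (WithLp.toLp 2 (fun i => sgn (σ i) * x i) : EuclideanSpace ℝ (Fin N))) '' S

/-- The union `R(S) = ⋃_σ R(S; σ)` of all `2^N` coordinate reflections of `S`. -/
noncomputable def reflectAll {N : ℕ} (S : Set (EuclideanSpace ℝ (Fin N))) :
    Set (EuclideanSpace ℝ (Fin N)) :=
  ⋃ σ : Fin N → Bool, reflectSet σ S

/-- The translate `v + S` of a set `S ⊆ ℝ^N`. -/
def translateSet {N : ℕ} (v : EuclideanSpace ℝ (Fin N))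
    (S : Set (EuclideanSpace ℝ (Fin N))) : Set (EuclideanSpace ℝ (Fin N)) :=
  (fun x => v + x) '' S

/-- **Boundary of the reflected set on the disagreeing boundary.**
For an outcome `ô`, a subset `D ⊆ C_ô`, a closed set `F` with `F ∩ C = p_ô + D`, and
`G = p_ô + R(D)`, we have `vol_{N−1}(∂G ∩ (∂C \ Y_ô)) ≤ vol_{N−1}(F ∩ (∂C \ Y_ô))`. -/
theorem stmt_9 {N : ℕ} (hN : 1 ≤ N) (p₀ q₀ : ℝ) (hpq : p₀ < q₀)
    (o : Fin N → Outcome) (D : Set (EuclideanSpace ℝ (Fin N)))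
    (hD : D ⊆ cornerBox p₀ q₀ o)
    (F : Set (EuclideanSpace ℝ (Fin N))) (hFclosed : IsClosed F)
    (hF : F ∩ cube N p₀ q₀ = translateSet (corner p₀ q₀ o) D) :
    μH[((N : ℝ) - 1)] (frontier (translateSet (corner p₀ q₀ o) (reflectAll D)) ∩
        (frontier (cube N p₀ q₀) \ agreeSet p₀ q₀ o)) ≤
      μH[((N : ℝ) - 1)] (F ∩ (frontier (cube N p₀ q₀) \ agreeSet p₀ q₀ o)) := by
  -- It suffices to show the set inclusion.
  apply measure_mono
  set v : EuclideanSpace ℝ (Fin N) := corner p₀ q₀ o with hv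
  -- basic closedness facts
  have hcube_closed : IsClosed (cube N p₀ q₀) := by
    have : cube N p₀ q₀ = ⋂ i, (fun x : EuclideanSpace ℝ (Fin N) => x i) ⁻¹' Set.Icc p₀ q₀ := by
      ext x; simp [cube]
    rw [this]
    exact isClosed_iInter fun i => isClosed_Icc.preimage (PiLp.continuous_apply 2 _ i)
  have hbox_closed : IsClosed (cornerBox p₀ q₀ o) := by
    have : cornerBox p₀ q₀ o = ⋂ i, (fun x : EuclideanSpace ℝ (Fin N) => x i) ⁻¹'
        (if o i = Outcome.Accept then Set.Icc (-(q₀ - p₀)) 0 else Set.Icc 0 (q₀ - p₀)) := by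
      ext x
      simp only [cornerBox, Set.mem_setOf_eq, Set.mem_iInter, Set.mem_preimage]
      refine forall_congr' fun i => ?_
      by_cases h : o i = Outcome.Accept <;> simp [h]
    rw [this]
    refine isClosed_iInter fun i => ?_
    exact IsClosed.preimage (PiLp.continuous_apply 2 _ i) (by split <;> exact isClosed_Icc)
  -- translation as a preimage
  have htp : ∀ T : Set (EuclideanSpace ℝ (Fin N)), translateSet v T =
      (fun x => x - v) ⁻¹' T := by
    intro T; ext x
    constructor
    · rintro ⟨z, hz, rfl⟩
      simpa using hz
    · intro hx
      exact ⟨x - v, hx, by module⟩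
  have htrans_closed : ∀ T : Set (EuclideanSpace ℝ (Fin N)), IsClosed T →
      IsClosed (translateSet v T) := by
    intro T hT
    rw [htp]
    exact hT.preimage (continuous_id.sub continuous_const)
  -- reflection maps
  have hrc : ∀ σ : Fin N → Bool, Continuous (fun x : EuclideanSpace ℝ (Fin N) =>
      (WithLp.toLp 2 (fun i => sgn (σ i) * x i) : EuclideanSpace ℝ (Fin N))) := fun σ =>
    (PiLp.continuous_toLp 2 _).comp
      (continuous_pi fun i => continuous_const.mul (PiLp.continuous_apply 2 _ i))
  have hinv : ∀ σ : Fin N → Bool, Function.Involutive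
      (fun x : EuclideanSpace ℝ (Fin N) =>
        (WithLp.toLp 2 (fun i => sgn (σ i) * x i) : EuclideanSpace ℝ (Fin N))) := by
    intro σ x
    ext i
    show sgn (σ i) * (sgn (σ i) * x i) = x i
    cases h : σ i <;> simp [sgn]
  have hrefl_closed : ∀ (σ : Fin N → Bool) (T : Set (EuclideanSpace ℝ (Fin N))),
      IsClosed T → IsClosed (reflectSet σ T) := by
    intro σ T hT
    rw [reflectSet, Set.image_eq_preimage_of_inverse (hinv σ).leftInverse (hinv σ).rightInverse]
    exact hT.preimage (hrc σ)
  -- main inclusion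
  intro p hp
  obtain ⟨hpG, hpS⟩ := hp
  refine ⟨?_, hpS⟩
  have hpC : p ∈ cube N p₀ q₀ := hcube_closed.frontier_subset hpS.1
  -- p is in the closure of the translated reflectAll
  have h1 : p ∈ closure (translateSet v (reflectAll D)) := frontier_subset_closure hpG
  -- closure(reflectAll D) ⊆ union of reflectSet σ (closure D)
  have h2 : closure (reflectAll D) ⊆ ⋃ σ : Fin N → Bool, reflectSet σ (closure D) := by
    apply closure_minimal
    · exact Set.iUnion_mono fun σ => Set.image_mono subset_closure
    · exact isClosed_iUnion_of_finite fun σ => hrefl_closed σ _ isClosed_closure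
  -- pull p back through the translation
  have h3 : p - v ∈ closure (reflectAll D) := by
    have hsub : closure (translateSet v (reflectAll D)) ⊆
        translateSet v (closure (reflectAll D)) := by
      apply closure_minimal
      · exact Set.image_mono subset_closure
      · exact htrans_closed _ isClosed_closure
    have := hsub h1
    rw [htp] at this
    exact this
  obtain ⟨σ, hσ⟩ := Set.mem_iUnion.mp (h2 h3)
  obtain ⟨z, hz, hzy⟩ := hσ
  -- z lies in the corner box
  have hzbox : z ∈ cornerBox p₀ q₀ o := closure_minimal hD hbox_closed hz
  -- p - v lies in the corner box
  have hybox : p - v ∈ cornerBox p₀ q₀ o := by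
    simp only [cornerBox, Set.mem_setOf_eq]
    intro i
    have hpi := hpC i
    have hvi : v i = if o i = Outcome.Accept then q₀ else p₀ := rfl
    have hsub : (p - v) i = p i - v i := by simp
    by_cases h : o i = Outcome.Accept <;>
      · simp only [h, if_true, if_false, hsub, hvi, Set.mem_Icc] at *
        constructor <;> linarith [hpi.1, hpi.2]
  -- conclude p - v = z using the sign argument
  have hyz : p - v = z := by
    ext i
    have hcoord : sgn (σ i) * z i = (p - v) i := congrArg (fun w => w i) hzy
    have hz_i := hzbox i
    have hy_i := hybox i
    cases hb : σ i
    · -- sgn = -1 : forces the coordinate to be 0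
      rw [hb] at hcoord
      simp only [sgn, if_false, Bool.false_eq_true, neg_one_mul] at hcoord
      by_cases h : o i = Outcome.Accept <;>
        · simp only [h, if_true, if_false, Set.mem_Icc] at hz_i hy_i
          show (p - v) i = z i
          rw [← hcoord] at hy_i ⊢
          have : z i = 0 := by linarith [hz_i.1, hz_i.2, hy_i.1, hy_i.2]
          rw [this]; ring
    · rw [hb] at hcoord
      simp only [sgn, if_true, one_mul] at hcoord
      exact hcoord.symm
  -- hence p ∈ closure (translateSet v D) ⊆ F
  have hpD : p - v ∈ closure D := hyz ▸ hz
  have hmem : p ∈ (fun x => v + x) '' closure D := ⟨p - v, hpD, by module⟩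
  have hsub2 : (fun x => v + x) '' closure D ⊆ closure (translateSet v D) :=
    image_closure_subset_closure_image (continuous_const.add continuous_id)
  have hFsub : translateSet v D ⊆ F := by
    rw [← hF]; exact Set.inter_subset_left
  exact (hFclosed.closure_subset_iff.mpr hFsub) (hsub2 hmem)
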